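/- arXiv:1107.1660 — 8 statements merged into one kernel-verified Lean document; each statement's English description precedes it below -/
import Mathlib

section
/- Given N entities with utilities U(e_i) ≥ 0, click probabilities C(e_i) ∈ (0,1], and abandonment probabilities γ(e_i) ≥ 0 with C(e_i)+γ(e_i) ≤ 1, the expected utility E(U) = Σ_{i=1}^{N} U(e_i)·C(e_i)·Π_{j=1}^{i-1}(1 − C(e_j) − γ(e_j)) is maximized over all permutations of the entities when they are arranged in descending order of CE(e) = U(e)·C(e)/(C(e)+γ(e)). -/
/-- The expected-utility functional of a ranked list, with per-entity
click weight `w` and continuation probability `d`. -/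
def chainF {α : Type*} (w d : α → ℝ) : List α → ℝ
  | [] => 0
  | a :: l => w a + d a * chainF w d l

section Chain

variable {α : Type*} (w d : α → ℝ)

/-- Swapping an adjacent out-of-order pair does not decrease the value. -/
lemma chainF_swap (a b : α) (m : List α)
    (hR : w b * (1 - d a) ≤ w a * (1 - d b)) :
    chainF w d (b :: a :: m) ≤ chainF w d (a :: b :: m) := by
  simp only [chainF]
  nlinarith [mul_comm (d a) (d b)]

/-- Moving a maximal element to the front does not decrease the value. -/
lemma chainF_moveFront (hd0 : ∀ x, 0 ≤ d x) (a : α) :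
    ∀ (u : List α) (v : List α), (∀ b ∈ u, w b * (1 - d a) ≤ w a * (1 - d b)) →
      chainF w d (u ++ a :: v) ≤ chainF w d (a :: (u ++ v)) := by
  intro u
  induction u with
  | nil => intro v _; simp
  | cons b u' ih =>
      intro v hR
      have h1 : chainF w d ((b :: u') ++ a :: v)
          ≤ chainF w d (b :: a :: (u' ++ v)) := by
        simp only [List.cons_append, chainF, List.append_eq]
        have := ih v (fun x hx => hR x (List.mem_cons_of_mem _ hx))
        simp only [List.append_eq, chainF] at this
        have hb := hd0 b
        nlinarith [this, hb]
      have h2 : chainF w d (b :: a :: (u' ++ v))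
          ≤ chainF w d (a :: (b :: (u' ++ v))) :=
        chainF_swap w d a b _ (hR b List.mem_cons_self)
      calc chainF w d ((b :: u') ++ a :: v) ≤ _ := h1
        _ ≤ _ := h2
        _ = chainF w d (a :: ((b :: u') ++ v)) := by simp

/-- A list sorted descending by the exchange relation maximizes `chainF`
among its permutations. -/
lemma chainF_le_sorted (hd0 : ∀ x, 0 ≤ d x) :
    ∀ (l' l : List α), l.Perm l' →
      l'.Pairwise (fun a b => w b * (1 - d a) ≤ w a * (1 - d b)) →
      chainF w d l ≤ chainF w d l' := by
  intro l'
  induction l' with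
  | nil => intro l hp _; rw [List.perm_nil.mp hp]
  | cons a t' ih =>
      intro l hp hs
      have ha : a ∈ l := hp.symm.subset List.mem_cons_self
      obtain ⟨u, v, rfl⟩ := List.append_of_mem ha
      have hperm : (u ++ v).Perm t' :=
        (List.perm_middle.symm.trans hp).cons_inv
      have hsc := List.pairwise_cons.mp hs
      have hmax : ∀ b ∈ u, w b * (1 - d a) ≤ w a * (1 - d b) := by
        intro b hb
        exact hsc.1 b (hperm.subset (List.mem_append_left _ hb))
      have h1 := chainF_moveFront w d hd0 a u v hmax
      have h2 : chainF w d (u ++ v) ≤ chainF w d t' := ih _ hperm hsc.2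
      calc chainF w d (u ++ a :: v) ≤ chainF w d (a :: (u ++ v)) := h1
        _ = w a + d a * chainF w d (u ++ v) := rfl
        _ ≤ w a + d a * chainF w d t' := by
            have := mul_le_mul_of_nonneg_left h2 (hd0 a)
            linarith
        _ = chainF w d (a :: t') := rfl

end Chain

/-- The Fin-indexed sum with prefix products equals `chainF` of the list. -/
lemma sum_eq_chainF {α : Type*} (w d : α → ℝ) :
    ∀ (N : ℕ) (v : Fin N → α),
      ∑ i : Fin N, w (v i) *
          ∏ j ∈ Finset.univ.filter (fun j => j < i), d (v j)
        = chainF w d (List.ofFn v) := by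
  intro N
  induction N with
  | zero => intro v; simp [chainF]
  | succ n ih =>
      intro v
      have key : ∀ (i : Fin n),
          ∏ j ∈ Finset.univ.filter (fun j => j < Fin.succ i), d (v j)
            = d (v 0) * ∏ j ∈ Finset.univ.filter (fun j => j < i),
                d (v (Fin.succ j)) := by
        intro i
        rw [Finset.prod_filter, Finset.prod_filter, Fin.prod_univ_succ]
        congr 1
        · simp [Fin.succ_pos]
      rw [Fin.sum_univ_succ, List.ofFn_succ]
      simp only [chainF]
      congr 1
      · have : (Finset.univ.filter (fun j : Fin (n+1) => j < (0 : Fin (n+1))))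
            = ∅ := by
          apply Finset.filter_false_of_mem
          intro x _
          exact Fin.not_lt_zero x
        rw [this]
        simp
      · rw [← ih (fun i => v (Fin.succ i))]
        rw [Finset.mul_sum]
        apply Finset.sum_congr rfl
        intro i _
        rw [key i]
        ring

lemma ofFn_perm_ofFn {N : ℕ} (σ τ : Equiv.Perm (Fin N)) :
    (List.ofFn (fun i => τ i)).Perm (List.ofFn (fun i => σ i)) := by
  have h : ∀ (e : Equiv.Perm (Fin N)),
      (List.ofFn (fun i => e i)).Perm (List.finRange N) := by
    intro e
    apply List.perm_of_nodup_nodup_toFinset_eq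
    · rw [List.ofFn_eq_map]
      exact (List.nodup_finRange N).map e.injective
    · exact List.nodup_finRange N
    · ext x
      simp only [List.mem_toFinset, List.ofFn_eq_map, List.mem_map,
        List.mem_finRange, true_and]
      constructor
      · intro _; trivial
      · intro _; exact ⟨e.symm x, e.apply_symm_apply x⟩
  exact (h τ).trans (h σ).symm

/-- CE ranking optimality: arranging entities in descending order of
`CE(e) = U(e)·C(e)/(C(e)+γ(e))` maximizes the expected utility
`∑ i, U(eᵢ)·C(eᵢ)·∏_{j<i} (1 - C(eⱼ) - γ(eⱼ))` over all permutations. -/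
theorem ce_ranking_optimal (N : ℕ) (U C γ : Fin N → ℝ)
    (hU : ∀ e, 0 ≤ U e) (hC0 : ∀ e, 0 < C e) (hC1 : ∀ e, C e ≤ 1)
    (hγ : ∀ e, 0 ≤ γ e) (hsum : ∀ e, C e + γ e ≤ 1)
    (σ : Equiv.Perm (Fin N))
    (hsort : ∀ i j : Fin N, i ≤ j →
      U (σ j) * C (σ j) / (C (σ j) + γ (σ j)) ≤
        U (σ i) * C (σ i) / (C (σ i) + γ (σ i))) :
    ∀ τ : Equiv.Perm (Fin N),
      ∑ i : Fin N, U (τ i) * C (τ i) *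
          ∏ j ∈ Finset.univ.filter (fun j => j < i), (1 - C (τ j) - γ (τ j)) ≤
      ∑ i : Fin N, U (σ i) * C (σ i) *
          ∏ j ∈ Finset.univ.filter (fun j => j < i), (1 - C (σ j) - γ (σ j)) := by
  intro τ
  set w : Fin N → ℝ := fun e => U e * C e with hw
  set d : Fin N → ℝ := fun e => 1 - C e - γ e with hd
  have hpos : ∀ e, 0 < C e + γ e := fun e => by
    have := hC0 e; have := hγ e; linarith
  have hd0 : ∀ e, 0 ≤ d e := fun e => by
    have := hsum e; simp only [hd]; linarith
  have hsum1 : ∑ i : Fin N, w (τ i) *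
      ∏ j ∈ Finset.univ.filter (fun j => j < i), d (τ j)
        = chainF w d (List.ofFn (fun i => τ i)) := sum_eq_chainF w d N _
  have hsum2 : ∑ i : Fin N, w (σ i) *
      ∏ j ∈ Finset.univ.filter (fun j => j < i), d (σ j)
        = chainF w d (List.ofFn (fun i => σ i)) := sum_eq_chainF w d N _
  have hsorted : (List.ofFn (fun i => σ i)).Pairwise
      (fun a b => w b * (1 - d a) ≤ w a * (1 - d b)) := by
    rw [List.pairwise_ofFn]
    intro i j hij
    have h := hsort i j (le_of_lt hij)
    have h1da : 1 - d (σ i) = C (σ i) + γ (σ i) := by simp [hd]; ring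
    have h1db : 1 - d (σ j) = C (σ j) + γ (σ j) := by simp [hd]; ring
    rw [h1da, h1db, hw]
    dsimp only
    have := (div_le_div_iff₀ (hpos (σ j)) (hpos (σ i))).mp h
    linarith
  have hperm := ofFn_perm_ofFn σ τ
  calc ∑ i : Fin N, U (τ i) * C (τ i) *
        ∏ j ∈ Finset.univ.filter (fun j => j < i), (1 - C (τ j) - γ (τ j))
      = chainF w d (List.ofFn (fun i => τ i)) := hsum1
    _ ≤ chainF w d (List.ofFn (fun i => σ i)) :=
        chainF_le_sorted w d hd0 _ _ hperm hsorted
    _ = _ := hsum2.symm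
end

section
/- For two adjacent entities e_i, e_{i+1} in a ranked list, placing e_i above e_{i+1} yields total expected utility at least as large as the inverted placement if and only if U(e_i)C(e_i)/(C(e_i)+γ(e_i)) ≥ U(e_{i+1})C(e_{i+1})/(C(e_{i+1})+γ(e_{i+1})). -/
/-- Adjacent swap lemma: placing entity 1 above entity 2 yields at least as much
expected utility as the inverted placement iff `CE₁ ≥ CE₂`. Here `K > 0` is the
probability of reaching the pair's position. -/
theorem ce_adjacent_swap (U₁ C₁ γ₁ U₂ C₂ γ₂ K : ℝ) (hK : 0 < K)
    (hμ₁ : 0 < C₁ + γ₁) (hμ₁' : C₁ + γ₁ ≤ 1)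
    (hμ₂ : 0 < C₂ + γ₂) (hμ₂' : C₂ + γ₂ ≤ 1) :
    K * (U₂ * C₂ + (1 - (C₂ + γ₂)) * U₁ * C₁) ≤
      K * (U₁ * C₁ + (1 - (C₁ + γ₁)) * U₂ * C₂) ↔
    U₂ * C₂ / (C₂ + γ₂) ≤ U₁ * C₁ / (C₁ + γ₁) := by
  rw [mul_le_mul_iff_right₀ hK, div_le_div_iff₀ hμ₂ hμ₁]
  constructor <;> intro h <;> nlinarith
end

section
/- Suppose advertisers are indexed in descending order of v_i c_i/μ_i (v_i ≥ 0 private values, c_i ∈ (0,1], μ_i = c_i + γ_i ∈ (0,1]), and bids are defined recursively by b_i = (μ_i/c_i)[v_i c_i + (1−μ_i)·b_{i+1}c_{i+1}/μ_{i+1}] with b_{N+1} = 0. Then for all i: b_i c_i/μ_i ≥ b_{i+1}c_{i+1}/μ_{i+1}, i.e., the bid-induced pricing order w_i b_i agrees with the assumed order. -/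
/-- Step 1 of the Nash equilibrium proof: if advertisers `0,…,N-1` are indexed in
descending order of `vᵢcᵢ/μᵢ` (`μᵢ = cᵢ + γᵢ`) and bids are defined recursively by
`bᵢ = (μᵢ/cᵢ)[vᵢcᵢ + (1−μᵢ)b_{i+1}c_{i+1}/μ_{i+1}]` with bids vanishing from
position `N` on, then `bᵢcᵢ/μᵢ` is non-increasing: the bid-induced pricing order
`wᵢbᵢ` agrees with the assumed order. -/
theorem ce_equilibrium_bid_order (N : ℕ) (v c γ b : ℕ → ℝ)
    (hv : ∀ i, 0 ≤ v i)
    (hc : ∀ i, 0 < c i) (hc1 : ∀ i, c i ≤ 1)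
    (hγ : ∀ i, 0 ≤ γ i) (hμ : ∀ i, c i + γ i ≤ 1)
    (horder : ∀ i, v (i + 1) * c (i + 1) / (c (i + 1) + γ (i + 1)) ≤
      v i * c i / (c i + γ i))
    (hbN : ∀ i, N ≤ i → b i = 0)
    (hb : ∀ i, i < N → b i = ((c i + γ i) / c i) *
      (v i * c i + (1 - (c i + γ i)) * b (i + 1) * c (i + 1) / (c (i + 1) + γ (i + 1)))) :
    ∀ i, b (i + 1) * c (i + 1) / (c (i + 1) + γ (i + 1)) ≤
      b i * c i / (c i + γ i) := by
  have hμpos : ∀ i, 0 < c i + γ i := fun i => by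
    have := hc i; have := hγ i; linarith
  have key : ∀ d i, N - i ≤ d →
      b (i + 1) * c (i + 1) / (c (i + 1) + γ (i + 1)) ≤ b i * c i / (c i + γ i) ∧
      b i * c i / (c i + γ i) ≤ v i * c i / (c i + γ i) := by
    intro d
    induction d with
    | zero =>
      intro i hi
      have hNi : N ≤ i := by omega
      rw [hbN i hNi, hbN (i + 1) (by omega)]
      constructor
      · simp
      · simp only [zero_mul, zero_div]
        exact div_nonneg (mul_nonneg (hv i) (hc i).le) (hμpos i).le
    | succ d ih =>
      intro i hi
      by_cases hNi : N ≤ i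
      · rw [hbN i hNi, hbN (i + 1) (by omega)]
        constructor
        · simp
        · simp only [zero_mul, zero_div]
          exact div_nonneg (mul_nonneg (hv i) (hc i).le) (hμpos i).le
      · push_neg at hNi
        obtain ⟨h1, h2⟩ := ih (i + 1) (by omega)
        have h3 : b (i + 1) * c (i + 1) / (c (i + 1) + γ (i + 1)) ≤
            v i * c i / (c i + γ i) := h2.trans (horder i)
        have hwi : b i * c i / (c i + γ i) =
            (c i + γ i) * (v i * c i / (c i + γ i)) +
            (1 - (c i + γ i)) * (b (i + 1) * c (i + 1) / (c (i + 1) + γ (i + 1))) := by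
          rw [hb i hNi]
          field_simp [(hc i).ne', (hμpos i).ne', (hμpos (i+1)).ne']
        constructor
        · rw [hwi]
          nlinarith [hμpos i, hμ i]
        · rw [hwi]
          nlinarith [hμpos i, hμ i, hv i, hc i, div_nonneg (mul_nonneg (hv i) (hc i).le) (hμpos i).le]
  exact fun i => (key (N - i) i le_rfl).1
end

section
/- With the equilibrium bids b_i = (μ_i/c_i)[v_i c_i + (1−μ_i)b_{i+1}c_{i+1}/μ_{i+1}] (b_{N+1}=0) and advertisers ordered by descending v_i c_i/μ_i, no advertiser i can strictly increase his expected profit (v_i − price paid)·(probability of click at his position) by unilaterally changing his bid to occupy any other position j, where upon moving to position j he pays the minimum bid needed to hold position j in the w·b order. That is, the stated bids form a pure-strategy Nash equilibrium of the CE mechanism. -/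
/-- Nash equilibrium of the CE mechanism (Theorem 3): with advertisers `0,…,N-1`
ordered in descending `vᵢcᵢ/μᵢ` and bids
`bᵢ = (μᵢ/cᵢ)[vᵢcᵢ + (1−μᵢ)b_{i+1}c_{i+1}/μ_{i+1}]` (bids vanish from `N` on),
no advertiser `i` can strictly increase his expected profit by unilaterally
changing his bid to occupy another position `j`.  Moving to position `j ≥ i` he
pays `b_{j+1}c_{j+1}μᵢ/(μ_{j+1}cᵢ)` and the ads above him are `{0,…,j} \ {i}`;
moving to `j < i` he pays `b_j c_j μᵢ/(μ_j cᵢ)` and the ads above him are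
`{0,…,j-1}`.  His profit in place is `(vᵢ − pᵢ)·cᵢ·∏_{l<i}(1−μ_l)`. -/
theorem ce_nash_equilibrium (N : ℕ) (v c γ b : ℕ → ℝ)
    (hv : ∀ i, 0 ≤ v i)
    (hc : ∀ i, 0 < c i) (hc1 : ∀ i, c i ≤ 1)
    (hγ : ∀ i, 0 ≤ γ i) (hμ : ∀ i, c i + γ i ≤ 1)
    (horder : ∀ i, v (i + 1) * c (i + 1) / (c (i + 1) + γ (i + 1)) ≤
      v i * c i / (c i + γ i))
    (hbN : ∀ i, N ≤ i → b i = 0)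
    (hb : ∀ i, i < N → b i = ((c i + γ i) / c i) *
      (v i * c i + (1 - (c i + γ i)) * b (i + 1) * c (i + 1) / (c (i + 1) + γ (i + 1)))) :
    ∀ i j, i < N → j < N →
      (if i ≤ j then
        (v i - b (j + 1) * c (j + 1) * (c i + γ i) / ((c (j + 1) + γ (j + 1)) * c i))
          * c i * ∏ l ∈ (Finset.range (j + 1)).erase i, (1 - c l - γ l)
      else
        (v i - b j * c j * (c i + γ i) / ((c j + γ j) * c i))
          * c i * ∏ l ∈ Finset.range j, (1 - c l - γ l)) ≤
      (v i - b (i + 1) * c (i + 1) * (c i + γ i) / ((c (i + 1) + γ (i + 1)) * c i))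
        * c i * ∏ l ∈ Finset.range i, (1 - c l - γ l) := by
  intro i j hiN hjN
  -- abbreviations
  set μ : ℕ → ℝ := fun k => c k + γ k with hμdef
  have hμpos : ∀ k, 0 < μ k := fun k => lt_of_lt_of_le (hc k) (le_add_of_nonneg_right (hγ k))
  have hμ1 : ∀ k, μ k ≤ 1 := hμ
  have h1μ : ∀ k, (0:ℝ) ≤ 1 - μ k := fun k => by linarith [hμ1 k]
  have hcne : ∀ k, c k ≠ 0 := fun k => (hc k).ne'
  have hμne : ∀ k, μ k ≠ 0 := fun k => (hμpos k).ne'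
  set q : ℕ → ℝ := fun k => b k * c k / μ k with hqdef
  set r : ℕ → ℝ := fun k => v k * c k / μ k with hrdef
  have hq0 : ∀ k, N ≤ k → q k = 0 := by
    intro k hk; simp [hqdef, hbN k hk]
  have hqrec : ∀ k, k < N → q k = v k * c k + (1 - μ k) * q (k + 1) := by
    intro k hk
    have hbk := hb k hk
    show b k * c k / μ k = v k * c k + (1 - μ k) * (b (k+1) * c (k+1) / μ (k+1))
    rw [show ((c k + γ k) : ℝ) = μ k from rfl,
        show ((c (k+1) + γ (k+1)) : ℝ) = μ (k+1) from rfl] at hbk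
    rw [hbk]
    field_simp [hμne, hcne]
  have hvc : ∀ k, v k * c k = μ k * r k := by
    intro k; simp only [hrdef]; field_simp [hμne]
  have hrmono : Antitone r := antitone_nat_of_succ_le (fun n => horder n)
  have hrnn : ∀ k, 0 ≤ r k :=
    fun k => div_nonneg (mul_nonneg (hv k) (hc k).le) (hμpos k).le
  -- q k ≤ r k for k < N
  have hqler : ∀ d k, N ≤ k + d → k < N → q k ≤ r k := by
    intro d
    induction d with
    | zero => intro k h1 h2; omega
    | succ d ih =>
      intro k h1 h2
      rw [hqrec k h2, hvc k]
      by_cases hk1 : k + 1 < N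
      · have h3 : q (k+1) ≤ r (k+1) := ih (k+1) (by omega) hk1
        have h4 : r (k+1) ≤ r k := hrmono (by omega)
        nlinarith [h1μ k, hμpos k, hrnn k]
      · have : q (k+1) = 0 := hq0 (k+1) (by omega)
        rw [this]
        nlinarith [hμpos k, hμ1 k, hrnn k]
  have hqlerN : ∀ k, k < N → q k ≤ r k := fun k hk => hqler N k (by omega) hk
  -- q k ≥ 0
  have hqnnAux : ∀ d k, N ≤ k + d → 0 ≤ q k := by
    intro d
    induction d with
    | zero => intro k h1; rw [hq0 k (by omega)]
    | succ d ih =>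
      intro k h1
      by_cases hk : k < N
      · rw [hqrec k hk]
        have := ih (k+1) (by omega)
        nlinarith [mul_nonneg (hv k) (hc k).le, h1μ k]
      · rw [hq0 k (by omega)]
  have hqnn : ∀ k, 0 ≤ q k := fun k => hqnnAux N k (by omega)
  -- q is antitone
  have hqstep : ∀ k, q (k + 1) ≤ q k := by
    intro k
    by_cases hk : k < N
    · rw [hqrec k hk, hvc k]
      have h3 : q (k+1) ≤ r k := by
        by_cases hk1 : k + 1 < N
        · exact le_trans (hqlerN (k+1) hk1) (hrmono (by omega))
        · rw [hq0 (k+1) (by omega)]; exact hrnn k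
      nlinarith [hμpos k]
    · rw [hq0 k (by omega), hq0 (k+1) (by omega)]
  have hqmono : Antitone q := antitone_nat_of_succ_le hqstep
  -- payments below position i are affordable
  have hkey : ∀ k, i + 1 ≤ k → μ i * q k ≤ v i * c i := by
    intro k hk
    have h1 : q k ≤ q (i+1) := hqmono hk
    by_cases hi1 : i + 1 < N
    · have h2 : q (i+1) ≤ r (i+1) := hqlerN (i+1) hi1
      have h3 : r (i+1) ≤ r i := hrmono (by omega)
      rw [hvc i]
      nlinarith [hμpos i]
    · have h2 : q (i+1) = 0 := hq0 (i+1) (by omega)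
      have h4 : q k = 0 := le_antisymm (h2 ▸ h1) (hqnn k)
      rw [h4]
      nlinarith [mul_nonneg (hv i) (hc i).le]
  -- products are nonnegative
  have hPnn : ∀ (s : Finset ℕ), 0 ≤ ∏ l ∈ s, (1 - c l - γ l) := by
    intro s
    apply Finset.prod_nonneg
    intro l _
    have := h1μ l
    simp only [hμdef] at this
    linarith
  -- Lemma A : downward deviations
  have hA : ∀ k, i ≤ k →
      (v i * c i - μ i * q (k+1)) * ∏ l ∈ Finset.Ico (i+1) (k+1), (1 - c l - γ l) ≤
      v i * c i - μ i * q (i+1) := by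
    intro k hk
    induction k, hk using Nat.le_induction with
    | base => simp
    | succ n hn ih =>
      rw [Finset.prod_Ico_succ_top (by omega)]
      have key : (v i * c i - μ i * q (n+1+1)) * (1 - c (n+1) - γ (n+1)) ≤
          v i * c i - μ i * q (n+1) := by
        have hfac : (1 : ℝ) - c (n+1) - γ (n+1) = 1 - μ (n+1) := by
          simp only [hμdef]; ring
        rw [hfac]
        by_cases hn1 : n + 1 < N
        · have hrec := hqrec (n+1) hn1
          have hvc1 := hvc (n+1)
          have hr1 : r (n+1) ≤ r i := hrmono (by omega)
          rw [hrec, hvc1, hvc i]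
          nlinarith [hμpos (n+1), hμpos i, h1μ (n+1),
            mul_nonneg (mul_nonneg (hμpos (n+1)).le (hμpos i).le) (sub_nonneg.2 hr1)]
        · rw [hq0 (n+1) (by omega), hq0 (n+2) (by omega)]
          nlinarith [mul_nonneg (hv i) (hc i).le, hμpos (n+1), h1μ (n+1)]
      calc (v i * c i - μ i * q (n+1+1)) *
              ((∏ l ∈ Finset.Ico (i+1) (n+1), (1 - c l - γ l)) * (1 - c (n+1) - γ (n+1)))
          = ((v i * c i - μ i * q (n+1+1)) * (1 - c (n+1) - γ (n+1))) *
              ∏ l ∈ Finset.Ico (i+1) (n+1), (1 - c l - γ l) := by ring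
        _ ≤ (v i * c i - μ i * q (n+1)) * ∏ l ∈ Finset.Ico (i+1) (n+1), (1 - c l - γ l) :=
            mul_le_mul_of_nonneg_right key (hPnn _)
        _ ≤ v i * c i - μ i * q (i+1) := ih
  -- Lemma B : upward deviations
  have hB : ∀ d k, k + d = i →
      (v i * c i - μ i * q k) * ∏ l ∈ Finset.range k, (1 - c l - γ l) ≤
      (v i * c i - μ i * q (i+1)) * ∏ l ∈ Finset.range i, (1 - c l - γ l) := by
    intro d
    induction d with
    | zero =>
      intro k hk
      have : k = i := by omega
      subst this
      apply mul_le_mul_of_nonneg_right _ (hPnn _)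
      have := hqstep k
      nlinarith [hμpos k]
    | succ d ih =>
      intro k hk
      have hki : k < i := by omega
      have hkN : k < N := by omega
      have step : (v i * c i - μ i * q k) * ∏ l ∈ Finset.range k, (1 - c l - γ l) ≤
          (v i * c i - μ i * q (k+1)) * ∏ l ∈ Finset.range (k+1), (1 - c l - γ l) := by
        rw [Finset.prod_range_succ]
        have hfac : (1 : ℝ) - c k - γ k = 1 - μ k := by simp only [hμdef]; ring
        rw [hfac]
        have key : v i * c i - μ i * q k ≤ (v i * c i - μ i * q (k+1)) * (1 - μ k) := by
          rw [hqrec k hkN, hvc k, hvc i]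
          have hr1 : r i ≤ r k := hrmono (by omega)
          nlinarith [hμpos k, hμpos i,
            mul_nonneg (mul_nonneg (hμpos i).le (hμpos k).le) (sub_nonneg.2 hr1)]
        calc (v i * c i - μ i * q k) * ∏ l ∈ Finset.range k, (1 - c l - γ l)
            ≤ ((v i * c i - μ i * q (k+1)) * (1 - μ k)) *
                ∏ l ∈ Finset.range k, (1 - c l - γ l) :=
              mul_le_mul_of_nonneg_right key (hPnn _)
          _ = (v i * c i - μ i * q (k+1)) *
                ((∏ l ∈ Finset.range k, (1 - c l - γ l)) * (1 - μ k)) := by ring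
      exact le_trans step (ih (k+1) (by omega))
  -- rewrite the goal in terms of q
  have e2 : (v i - b (i + 1) * c (i + 1) * (c i + γ i) / ((c (i + 1) + γ (i + 1)) * c i))
      * c i = v i * c i - μ i * q (i+1) := by
    show (v i - b (i + 1) * c (i + 1) * μ i / (μ (i + 1) * c i)) * c i =
      v i * c i - μ i * (b (i+1) * c (i+1) / μ (i+1))
    field_simp [hμne, hcne]
  by_cases hij : i ≤ j
  · rw [if_pos hij]
    have e1 : (v i - b (j + 1) * c (j + 1) * (c i + γ i) / ((c (j + 1) + γ (j + 1)) * c i))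
        * c i = v i * c i - μ i * q (j+1) := by
      show (v i - b (j + 1) * c (j + 1) * μ i / (μ (j + 1) * c i)) * c i =
        v i * c i - μ i * (b (j+1) * c (j+1) / μ (j+1))
      field_simp [hμne, hcne]
    rw [e1, e2]
    have herase : (Finset.range (j+1)).erase i =
        Finset.range i ∪ Finset.Ico (i+1) (j+1) := by
      ext l
      simp only [Finset.mem_erase, Finset.mem_range, Finset.mem_union, Finset.mem_Ico]
      omega
    have hdisj : Disjoint (Finset.range i) (Finset.Ico (i+1) (j+1)) := by
      rw [Finset.disjoint_left]
      intro a ha hb'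
      simp only [Finset.mem_range] at ha
      simp only [Finset.mem_Ico] at hb'
      omega
    rw [herase, Finset.prod_union hdisj]
    calc (v i * c i - μ i * q (j+1)) *
            ((∏ l ∈ Finset.range i, (1 - c l - γ l)) *
              ∏ l ∈ Finset.Ico (i+1) (j+1), (1 - c l - γ l))
        = ((v i * c i - μ i * q (j+1)) * ∏ l ∈ Finset.Ico (i+1) (j+1), (1 - c l - γ l)) *
            ∏ l ∈ Finset.range i, (1 - c l - γ l) := by ring
      _ ≤ (v i * c i - μ i * q (i+1)) * ∏ l ∈ Finset.range i, (1 - c l - γ l) :=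
          mul_le_mul_of_nonneg_right (hA j hij) (hPnn _)
  · rw [if_neg hij]
    have e3 : (v i - b j * c j * (c i + γ i) / ((c j + γ j) * c i)) * c i =
        v i * c i - μ i * q j := by
      show (v i - b j * c j * μ i / (μ j * c i)) * c i =
        v i * c i - μ i * (b j * c j / μ j)
      field_simp [hμne, hcne]
    rw [e3, e2]
    exact hB (i - j) j (by omega)
end

section
/- In the CE auction equilibrium bids b_i = (μ_i/c_i)[v_i c_i + (1−μ_i)b_{i+1}c_{i+1}/μ_{i+1}], the induced ranking (descending w_i b_i) coincides with the socially optimal order, i.e., descending v_i c_i/μ_i; hence the equilibrium allocation maximizes total advertiser revenue Σ_i v_i c_i Π_{j<i}(1−μ_j) over all orderings. -/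
noncomputable def revList : List (ℝ × ℝ) → ℝ
  | [] => 0
  | p :: l => p.1 + (1 - p.2) * revList l

lemma rev_swap (p q : ℝ × ℝ) (l : List (ℝ × ℝ)) (hpq : q.1 * p.2 ≤ p.1 * q.2) :
    revList (q :: p :: l) ≤ revList (p :: q :: l) := by
  simp only [revList]; nlinarith [revList l, revList l]

lemma rev_mono_tail (p : ℝ × ℝ) (l₁ l₂ : List (ℝ × ℝ)) (h2 : p.2 ≤ 1)
    (h : revList l₁ ≤ revList l₂) : revList (p :: l₁) ≤ revList (p :: l₂) := by
  simp only [revList]; nlinarith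

lemma rev_move_front (l : List (ℝ × ℝ)) (h1 : ∀ q ∈ l, q.2 ≤ 1)
    (hs : l.Pairwise (fun p q => q.1 * p.2 ≤ p.1 * q.2)) (x : ℝ × ℝ) (hx : x ∈ l) :
    revList (x :: l.erase x) ≤ revList l := by
  induction l with
  | nil => simp at hx
  | cons y t ih =>
    by_cases hxy : y = x
    · subst hxy; rw [List.erase_cons_head]
    · rw [List.erase_cons_tail (by simpa using hxy)]
      have hxt : x ∈ t := by
        rcases List.mem_cons.mp hx with h | h
        · exact absurd h.symm hxy
        · exact h
      have hRyx : x.1 * y.2 ≤ y.1 * x.2 := (List.pairwise_cons.mp hs).1 x hxt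
      calc revList (x :: y :: t.erase x) ≤ revList (y :: x :: t.erase x) :=
            rev_swap y x _ hRyx
        _ ≤ revList (y :: t) := rev_mono_tail y _ _ (h1 y (by simp))
            (ih (fun q hq => h1 q (by simp [hq])) (List.pairwise_cons.mp hs).2 hxt)

lemma my_perm_cons_erase : ∀ (l : List (ℝ × ℝ)) (x : ℝ × ℝ), x ∈ l → l.Perm (x :: l.erase x) := by
  intro l
  induction l with
  | nil => simp
  | cons y t ih =>
    intro x hx
    by_cases h : y = x
    · subst h; rw [List.erase_cons_head]
    · rw [List.erase_cons_tail (by simpa using h)]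
      rcases List.mem_cons.mp hx with h' | h'
      · exact absurd h'.symm h
      · exact ((ih x h').cons y).trans (List.Perm.swap x y _)

lemma rev_perm_le : ∀ n : ℕ, ∀ l' l : List (ℝ × ℝ), l'.length ≤ n → l'.Perm l →
    (∀ q ∈ l, q.2 ≤ 1) → l.Pairwise (fun p q => q.1 * p.2 ≤ p.1 * q.2) →
    revList l' ≤ revList l := by
  intro n
  induction n with
  | zero =>
    intro l' l hlen hp _ _
    have : l' = [] := List.length_eq_zero_iff.mp (Nat.le_zero.mp hlen)
    subst this
    rw [← hp.nil_eq]
  | succ n ih =>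
    intro l' l hlen hp h1 hs
    match l' with
    | [] => rw [← hp.nil_eq]
    | x :: t' =>
      have hx : x ∈ l := hp.mem_iff.mp (by simp)
      have hpe : l.Perm (x :: l.erase x) := my_perm_cons_erase l x hx
      have ht' : t'.Perm (l.erase x) := (List.perm_cons x).mp (hp.trans hpe)
      have herase_sub := (List.erase_sublist : (l.erase x).Sublist l)
      have h1' : ∀ q ∈ l.erase x, q.2 ≤ 1 := fun q hq => h1 q (herase_sub.mem hq)
      have hs' := hs.sublist herase_sub
      have hlen' : t'.length ≤ n := by
        have := hlen; simp at this; omega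
      have step1 : revList t' ≤ revList (l.erase x) := ih t' _ hlen' ht' h1' hs'
      have hx2 : x.2 ≤ 1 := h1 x hx
      calc revList (x :: t') ≤ revList (x :: l.erase x) := rev_mono_tail x _ _ hx2 step1
        _ ≤ revList l := rev_move_front l h1 hs x hx

lemma sum_eq_rev : ∀ (N : ℕ) (f m : Fin N → ℝ),
    ∑ i, f i * ∏ j ∈ Finset.univ.filter (fun j => j < i), (1 - m j)
    = revList (List.ofFn (fun i => (f i, m i))) := by
  intro N
  induction N with
  | zero => intro f m; simp [revList]
  | succ n ih =>
    intro f m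
    rw [List.ofFn_succ]
    simp only [revList]
    rw [Fin.sum_univ_succ]
    have h0 : ∀ i : Fin (n+1), ∏ j ∈ Finset.univ.filter (fun j => j < i), (1 - m j)
        = ∏ j : Fin (n+1), if j < i then (1 - m j) else 1 := by
      intro i; rw [Finset.prod_filter]
    have key : ∑ i : Fin n, f i.succ * ∏ j ∈ Finset.univ.filter (fun j => j < i.succ), (1 - m j)
        = (1 - m 0) * ∑ i : Fin n, (f ∘ Fin.succ) i *
            ∏ j ∈ Finset.univ.filter (fun j => j < i), (1 - (m ∘ Fin.succ) j) := by
      rw [Finset.mul_sum]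
      apply Finset.sum_congr rfl
      intro i _
      rw [h0, Fin.prod_univ_succ]
      have h00 : ((0 : Fin (n+1)) < i.succ) := Fin.succ_pos i
      rw [if_pos h00]
      have : ∀ j : Fin n, (if j.succ < i.succ then (1 - m j.succ) else 1)
          = (if j < i then (1 - m j.succ) else 1) := by
        intro j; congr 1; simp [Fin.succ_lt_succ_iff]
      rw [Finset.prod_congr rfl (fun j _ => this j)]
      rw [Finset.prod_filter]
      simp only [Function.comp_apply]
      ring
    rw [key, ih (f ∘ Fin.succ) (m ∘ Fin.succ)]
    simp

/-- At the CE equilibrium bids, the induced ranking (descending `wᵢbᵢ = bᵢcᵢ/μᵢ`)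
coincides with the socially optimal order (descending `vᵢcᵢ/μᵢ`, here the index
order), and hence the equilibrium allocation maximizes total advertiser revenue
`∑ᵢ vᵢcᵢ∏_{j<i}(1−μⱼ)` over all orderings. -/
theorem ce_equilibrium_socially_optimal (N : ℕ) (v c γ b : ℕ → ℝ)
    (hv : ∀ i, 0 ≤ v i)
    (hc : ∀ i, 0 < c i) (hc1 : ∀ i, c i ≤ 1)
    (hγ : ∀ i, 0 ≤ γ i) (hμ : ∀ i, c i + γ i ≤ 1)
    (horder : ∀ i, v (i + 1) * c (i + 1) / (c (i + 1) + γ (i + 1)) ≤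
      v i * c i / (c i + γ i))
    (hbN : ∀ i, N ≤ i → b i = 0)
    (hb : ∀ i, i < N → b i = ((c i + γ i) / c i) *
      (v i * c i + (1 - (c i + γ i)) * b (i + 1) * c (i + 1) / (c (i + 1) + γ (i + 1)))) :
    (∀ i, b (i + 1) * c (i + 1) / (c (i + 1) + γ (i + 1)) ≤
      b i * c i / (c i + γ i)) ∧
    (∀ σ : Equiv.Perm (Fin N),
      ∑ i : Fin N, v (σ i) * c (σ i) *
          ∏ j ∈ Finset.univ.filter (fun j => j < i), (1 - c (σ j) - γ (σ j)) ≤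
      ∑ i : Fin N, v i * c i *
          ∏ j ∈ Finset.univ.filter (fun j => j < i), (1 - c (j : ℕ) - γ (j : ℕ))) := by
  have hμpos : ∀ i, 0 < c i + γ i := fun i => add_pos_of_pos_of_nonneg (hc i) (hγ i)
  set B : ℕ → ℝ := fun i => b i * c i / (c i + γ i) with hB
  have hrec : ∀ i, i < N → B i = v i * c i + (1 - (c i + γ i)) * B (i + 1) := by
    intro i hi
    have h := hb i hi
    simp only [hB]
    rw [h]
    have h1 : c i ≠ 0 := (hc i).ne'
    have h2 : c i + γ i ≠ 0 := (hμpos i).ne'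
    have h3 : c (i+1) + γ (i+1) ≠ 0 := (hμpos (i+1)).ne'
    field_simp
  -- decreasing bound on r
  have hrle : ∀ a d : ℕ, v (a + d) * c (a + d) / (c (a + d) + γ (a + d)) ≤
      v a * c a / (c a + γ a) := by
    intro a d
    induction d with
    | zero => simp
    | succ d ih => exact le_trans (horder (a + d)) ih
  have hrle' : ∀ a e : ℕ, a ≤ e → v e * c e / (c e + γ e) ≤ v a * c a / (c a + γ a) := by
    intro a e h
    obtain ⟨d, rfl⟩ := Nat.exists_eq_add_of_le h
    exact hrle a d
  have claimA : ∀ k i, N ≤ i + k → B i ≤ v i * c i / (c i + γ i) := by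
    intro k
    induction k with
    | zero =>
      intro i hi
      simp only [hB]
      rw [hbN i (by omega)]
      simp only [zero_mul, zero_div]
      exact div_nonneg (mul_nonneg (hv i) (hc i).le) (hμpos i).le
    | succ k ih =>
      intro i hi
      by_cases hiN : N ≤ i
      · simp only [hB]; rw [hbN i hiN]; simp only [zero_mul, zero_div]; exact div_nonneg (mul_nonneg (hv i) (hc i).le) (hμpos i).le
      · push_neg at hiN
        have h1 : B (i + 1) ≤ v (i+1) * c (i+1) / (c (i+1) + γ (i+1)) :=
          ih (i + 1) (by omega)
        have h2 := horder i
        have h3 : (0:ℝ) ≤ 1 - (c i + γ i) := by linarith [hμ i]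
        have h4 : B (i+1) ≤ v i * c i / (c i + γ i) := le_trans h1 h2
        rw [hrec i hiN]
        have key : v i * c i + (1 - (c i + γ i)) * (v i * c i / (c i + γ i))
            = v i * c i / (c i + γ i) := by
          have h2 : c i + γ i ≠ 0 := (hμpos i).ne'
          field_simp
          ring
        calc v i * c i + (1 - (c i + γ i)) * B (i + 1)
            ≤ v i * c i + (1 - (c i + γ i)) * (v i * c i / (c i + γ i)) := by nlinarith
          _ = v i * c i / (c i + γ i) := key
  constructor
  · intro i
    show B (i + 1) ≤ B i
    by_cases hiN : N ≤ i
    · simp only [hB]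
      rw [hbN i hiN, hbN (i+1) (by omega)]
      simp
    · push_neg at hiN
      have h1 : B (i + 1) ≤ v (i+1) * c (i+1) / (c (i+1) + γ (i+1)) :=
        claimA N (i+1) (by omega)
      have h4 : B (i+1) ≤ v i * c i / (c i + γ i) := le_trans h1 (horder i)
      have h5 : (c i + γ i) * B (i+1) ≤ v i * c i := by
        rw [← le_div_iff₀' (hμpos i)]
        exact h4
      rw [hrec i hiN]
      nlinarith
  · intro σ
    set g : Fin N → ℝ × ℝ := fun i => (v (i : ℕ) * c (i : ℕ), c (i : ℕ) + γ (i : ℕ)) with hg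
    have e1 : ∑ i : Fin N, v (σ i) * c (σ i) *
          ∏ j ∈ Finset.univ.filter (fun j => j < i), (1 - c (σ j) - γ (σ j))
        = revList (List.ofFn (g ∘ σ)) := by
      have h := sum_eq_rev N (fun i : Fin N => v ((σ i : Fin N) : ℕ) * c ((σ i : Fin N) : ℕ))
        (fun i : Fin N => c ((σ i : Fin N) : ℕ) + γ ((σ i : Fin N) : ℕ))
      have hofn : (List.ofFn (fun i : Fin N =>
          ((fun i : Fin N => v ((σ i : Fin N) : ℕ) * c ((σ i : Fin N) : ℕ)) i,
           (fun i : Fin N => c ((σ i : Fin N) : ℕ) + γ ((σ i : Fin N) : ℕ)) i)))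
          = List.ofFn (g ∘ σ) := rfl
      rw [hofn] at h
      rw [← h]
      apply Finset.sum_congr rfl
      intro i _
      congr 1
      apply Finset.prod_congr rfl
      intro j _
      ring
    have e2 : ∑ i : Fin N, v (i : ℕ) * c (i : ℕ) *
          ∏ j ∈ Finset.univ.filter (fun j => j < i), (1 - c (j : ℕ) - γ (j : ℕ))
        = revList (List.ofFn g) := by
      have h := sum_eq_rev N (fun i : Fin N => v (i : ℕ) * c (i : ℕ))
        (fun i : Fin N => c (i : ℕ) + γ (i : ℕ))
      have hofn : (List.ofFn (fun i : Fin N =>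
          ((fun i : Fin N => v (i : ℕ) * c (i : ℕ)) i,
           (fun i : Fin N => c (i : ℕ) + γ (i : ℕ)) i))) = List.ofFn g := rfl
      rw [hofn] at h
      rw [← h]
      apply Finset.sum_congr rfl
      intro i _
      congr 1
      apply Finset.prod_congr rfl
      intro j _
      ring
    rw [e1, e2]
    have hperm : (List.ofFn (g ∘ σ)).Perm (List.ofFn g) :=
      Equiv.Perm.ofFn_comp_perm σ g
    have h1 : ∀ q ∈ List.ofFn g, q.2 ≤ 1 := by
      intro q hq
      obtain ⟨i, rfl⟩ := List.mem_ofFn.mp hq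
      exact hμ (i : ℕ)
    have hs : (List.ofFn g).Pairwise (fun p q => q.1 * p.2 ≤ p.1 * q.2) := by
      rw [List.pairwise_ofFn]
      intro i j hij
      have hle : (i : ℕ) ≤ (j : ℕ) := le_of_lt hij
      have := hrle' (i : ℕ) (j : ℕ) hle
      simp only [hg]
      rw [div_le_div_iff₀ (hμpos _) (hμpos _)] at this
      exact this
    exact rev_perm_le (List.ofFn (g ∘ σ)).length _ _ le_rfl hperm h1 hs
end

section
/- For the same bid vector and the same ranking, the CE mechanism payment dominates the VCG payment at every position: p_i^{CE} = b_{i+1}c_{i+1}μ_i/(μ_{i+1}c_i) ≥ p_i^V = (μ_i/c_i)Σ_{j=i+1}^{N} b_j c_j Π_{k=i+1}^{j-1}(1−μ_k), provided the bids are sorted so that b_i c_i/μ_i is non-increasing in i. Consequently the search engine's total expected revenue under CE pricing is at least that under VCG pricing. -/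
/-- Search engine revenue dominance of CE over VCG (Theorem 4): for the same bid
vector (sorted so that `bᵢcᵢ/μᵢ` is non-increasing, bids nonnegative and
vanishing from position `N` on) and the same ranking, the CE payment
`pᵢᶜᴱ = b_{i+1}c_{i+1}μᵢ/(μ_{i+1}cᵢ)` dominates the VCG payment
`pᵢᵛ = (μᵢ/cᵢ)∑_{j=i+1}^{N-1} bⱼcⱼ∏_{k=i+1}^{j-1}(1−μₖ)` at every position, and
consequently the total expected search engine revenue under CE pricing is at
least that under VCG pricing. -/
theorem ce_revenue_dominates_vcg (N : ℕ) (b c γ : ℕ → ℝ) (pV pCE : ℕ → ℝ)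
    (hc : ∀ i, 0 < c i) (hc1 : ∀ i, c i ≤ 1)
    (hγ : ∀ i, 0 ≤ γ i) (hμ : ∀ i, c i + γ i ≤ 1)
    (hb0 : ∀ i, 0 ≤ b i) (hbN : ∀ i, N ≤ i → b i = 0)
    (hsort : ∀ i, b (i + 1) * c (i + 1) / (c (i + 1) + γ (i + 1)) ≤
      b i * c i / (c i + γ i))
    (hpV : ∀ i, pV i = ((c i + γ i) / c i) *
      ∑ j ∈ Finset.Ico (i + 1) N, b j * c j *
        ∏ k ∈ Finset.Ico (i + 1) j, (1 - c k - γ k))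
    (hpCE : ∀ i, pCE i = b (i + 1) * c (i + 1) * (c i + γ i) /
      ((c (i + 1) + γ (i + 1)) * c i)) :
    (∀ i, i < N → pV i ≤ pCE i) ∧
    (∑ i ∈ Finset.range N, pV i * c i * ∏ j ∈ Finset.range i, (1 - c j - γ j) ≤
     ∑ i ∈ Finset.range N, pCE i * c i * ∏ j ∈ Finset.range i, (1 - c j - γ j)) := by
  have hμpos : ∀ i, 0 < c i + γ i := fun i => by
    have := hc i; have := hγ i; linarith
  have hone : ∀ i, 0 ≤ 1 - c i - γ i := fun i => by have := hμ i; linarith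
  -- key: S i ≤ b(i+1)c(i+1)/μ(i+1)
  have key : ∀ d i, N ≤ i + d →
      (∑ j ∈ Finset.Ico (i + 1) N, b j * c j *
          ∏ k ∈ Finset.Ico (i + 1) j, (1 - c k - γ k))
        ≤ b (i + 1) * c (i + 1) / (c (i + 1) + γ (i + 1)) := by
    intro d
    induction d with
    | zero =>
      intro i h
      rw [Finset.Ico_eq_empty (by omega : ¬ i + 1 < N), Finset.sum_empty]
      have := hb0 (i + 1); have := (hc (i + 1)).le; have := hμpos (i + 1)
      positivity
    | succ d ih =>
      intro i h
      by_cases hiN : i + 1 < N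
      · rw [Finset.sum_eq_sum_Ico_succ_bot hiN]
        rw [Finset.Ico_self, Finset.prod_empty, mul_one]
        have hrw : ∑ j ∈ Finset.Ico (i + 1 + 1) N, b j * c j *
              ∏ k ∈ Finset.Ico (i + 1) j, (1 - c k - γ k)
            = (1 - c (i + 1) - γ (i + 1)) *
              ∑ j ∈ Finset.Ico (i + 1 + 1) N, b j * c j *
                ∏ k ∈ Finset.Ico (i + 1 + 1) j, (1 - c k - γ k) := by
          rw [Finset.mul_sum]
          refine Finset.sum_congr rfl ?_
          intro j hj
          rw [Finset.mem_Ico] at hj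
          rw [Finset.prod_eq_prod_Ico_succ_bot (by omega : i + 1 < j)]
          ring
        rw [hrw]
        have hS := ih (i + 1) (by omega)
        have hsrt := hsort (i + 1)
        have h1 : (1 - c (i + 1) - γ (i + 1)) *
              (∑ j ∈ Finset.Ico (i + 1 + 1) N, b j * c j *
                ∏ k ∈ Finset.Ico (i + 1 + 1) j, (1 - c k - γ k))
            ≤ (1 - c (i + 1) - γ (i + 1)) *
              (b (i + 1) * c (i + 1) / (c (i + 1) + γ (i + 1))) := by
          exact mul_le_mul_of_nonneg_left (le_trans hS hsrt) (hone (i + 1))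
        have h2 : b (i + 1) * c (i + 1) + (1 - c (i + 1) - γ (i + 1)) *
              (b (i + 1) * c (i + 1) / (c (i + 1) + γ (i + 1)))
            = b (i + 1) * c (i + 1) / (c (i + 1) + γ (i + 1)) := by
          have hne : c (i + 1) + γ (i + 1) ≠ 0 := (hμpos (i + 1)).ne'
          field_simp
          ring
        linarith
      · rw [Finset.Ico_eq_empty (by omega : ¬ i + 1 < N), Finset.sum_empty]
        have := hb0 (i + 1); have := (hc (i + 1)).le; have := hμpos (i + 1)
        positivity
  have main : ∀ i, pV i ≤ pCE i := by
    intro i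
    rw [hpV i, hpCE i]
    have hk := key N i (by omega)
    have hfac : 0 ≤ (c i + γ i) / c i := by
      have := hc i; have := hγ i; positivity
    calc ((c i + γ i) / c i) * ∑ j ∈ Finset.Ico (i + 1) N, b j * c j *
            ∏ k ∈ Finset.Ico (i + 1) j, (1 - c k - γ k)
        ≤ ((c i + γ i) / c i) * (b (i + 1) * c (i + 1) / (c (i + 1) + γ (i + 1))) :=
          mul_le_mul_of_nonneg_left hk hfac
      _ = b (i + 1) * c (i + 1) * (c i + γ i) / ((c (i + 1) + γ (i + 1)) * c i) := by
          have h1 : c (i + 1) + γ (i + 1) ≠ 0 := (hμpos (i + 1)).ne'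
          have h2 : c i ≠ 0 := (hc i).ne'
          field_simp
  refine ⟨fun i _ => main i, ?_⟩
  refine Finset.sum_le_sum ?_
  intro i _
  have hw : 0 ≤ c i * ∏ j ∈ Finset.range i, (1 - c j - γ j) := by
    exact mul_nonneg (hc i).le (Finset.prod_nonneg fun j _ => hone j)
  have := mul_le_mul_of_nonneg_right (main i) hw
  calc pV i * c i * ∏ j ∈ Finset.range i, (1 - c j - γ j)
      = pV i * (c i * ∏ j ∈ Finset.range i, (1 - c j - γ j)) := by ring
    _ ≤ pCE i * (c i * ∏ j ∈ Finset.range i, (1 - c j - γ j)) := this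
    _ = pCE i * c i * ∏ j ∈ Finset.range i, (1 - c j - γ j) := by ring
end

section
/- When advertisers bid their true values b_i = v_i (sorted in descending v_i c_i/μ_i order), the VCG per-click payment satisfies the recursion p_i^V = (μ_i/c_i)[v_{i+1}c_{i+1} + (1−μ_{i+1})c_{i+1} p_{i+1}^V/μ_{i+1}], and the CE equilibrium payment with bids b_i = (μ_i/c_i)[v_i c_i + (1−μ_i)b_{i+1}c_{i+1}/μ_{i+1}] satisfies the identical recursion p_i^{CE} = (μ_i/c_i)[v_{i+1}c_{i+1} + (1−μ_{i+1})c_{i+1} p_{i+1}^{CE}/μ_{i+1}]; since p_N^V = p_N^{CE} = 0, the payments are equal at every position. Hence the search engine revenue at the CE equilibrium equals the revenue at the truthful dominant-strategy VCG equilibrium. -/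
/-- Equilibrium revenue equivalence with VCG (Theorem 5): with advertisers
ordered in descending `vᵢcᵢ/μᵢ`, the truthful VCG per-click payment
`pᵢᵛ = (μᵢ/cᵢ)∑_{j>i} vⱼcⱼ∏_{i<k<j}(1−μₖ)` and the CE equilibrium payment
`pᵢᶜᴱ = b_{i+1}c_{i+1}μᵢ/(μ_{i+1}cᵢ)` (with equilibrium bids
`bᵢ = (μᵢ/cᵢ)[vᵢcᵢ + (1−μᵢ)b_{i+1}c_{i+1}/μ_{i+1}]`) satisfy the identical
recursion `pᵢ = (μᵢ/cᵢ)[v_{i+1}c_{i+1} + (1−μ_{i+1})c_{i+1}p_{i+1}/μ_{i+1}]`;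
hence the payments, and the search engine revenues, coincide. -/
theorem ce_equilibrium_revenue_equals_vcg (N : ℕ) (v c γ b : ℕ → ℝ)
    (pV pCE : ℕ → ℝ)
    (hv : ∀ i, 0 ≤ v i)
    (hc : ∀ i, 0 < c i) (hc1 : ∀ i, c i ≤ 1)
    (hγ : ∀ i, 0 ≤ γ i) (hμ : ∀ i, c i + γ i ≤ 1)
    (horder : ∀ i, v (i + 1) * c (i + 1) / (c (i + 1) + γ (i + 1)) ≤
      v i * c i / (c i + γ i))
    (hbN : ∀ i, N ≤ i → b i = 0)
    (hb : ∀ i, i < N → b i = ((c i + γ i) / c i) *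
      (v i * c i + (1 - (c i + γ i)) * b (i + 1) * c (i + 1) / (c (i + 1) + γ (i + 1))))
    (hpV : ∀ i, pV i = ((c i + γ i) / c i) *
      ∑ j ∈ Finset.Ico (i + 1) N, v j * c j *
        ∏ k ∈ Finset.Ico (i + 1) j, (1 - c k - γ k))
    (hpCE : ∀ i, pCE i = b (i + 1) * c (i + 1) * (c i + γ i) /
      ((c (i + 1) + γ (i + 1)) * c i)) :
    (∀ i, i + 1 < N → pV i = ((c i + γ i) / c i) *
      (v (i + 1) * c (i + 1) +
        (1 - (c (i + 1) + γ (i + 1))) * c (i + 1) * pV (i + 1) / (c (i + 1) + γ (i + 1)))) ∧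
    (∀ i, i + 1 < N → pCE i = ((c i + γ i) / c i) *
      (v (i + 1) * c (i + 1) +
        (1 - (c (i + 1) + γ (i + 1))) * c (i + 1) * pCE (i + 1) / (c (i + 1) + γ (i + 1)))) ∧
    (∀ i, i < N → pCE i = pV i) ∧
    (∑ i ∈ Finset.range N, pCE i * c i * ∏ j ∈ Finset.range i, (1 - c j - γ j) =
     ∑ i ∈ Finset.range N, pV i * c i * ∏ j ∈ Finset.range i, (1 - c j - γ j)) := by
  have hμpos : ∀ i, 0 < c i + γ i := fun i =>
    add_pos_of_pos_of_nonneg (hc i) (hγ i)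
  have hVrec : ∀ i, i + 1 < N → pV i = ((c i + γ i) / c i) *
      (v (i + 1) * c (i + 1) +
        (1 - (c (i + 1) + γ (i + 1))) * c (i + 1) * pV (i + 1) / (c (i + 1) + γ (i + 1))) := by
    intro i hi
    have hS : ∑ j ∈ Finset.Ico (i + 1) N, v j * c j *
          ∏ k ∈ Finset.Ico (i + 1) j, (1 - c k - γ k)
        = v (i + 1) * c (i + 1) + (1 - c (i + 1) - γ (i + 1)) *
          ∑ j ∈ Finset.Ico (i + 2) N, v j * c j *
            ∏ k ∈ Finset.Ico (i + 2) j, (1 - c k - γ k) := by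
      rw [Finset.sum_eq_sum_Ico_succ_bot hi, Finset.Ico_self, Finset.prod_empty, mul_one,
        Finset.mul_sum]
      congr 1
      apply Finset.sum_congr rfl
      intro j hj
      have hij : i + 1 < j := (Finset.mem_Ico.mp hj).1
      rw [Finset.prod_eq_prod_Ico_succ_bot hij]
      ring
    have h1 := (hc i).ne'
    have h2 := (hc (i + 1)).ne'
    have h3 := (hμpos (i + 1)).ne'
    rw [hpV i, hpV (i + 1), hS]
    field_simp
    ring
  have hCErec : ∀ i, i + 1 < N → pCE i = ((c i + γ i) / c i) *
      (v (i + 1) * c (i + 1) +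
        (1 - (c (i + 1) + γ (i + 1))) * c (i + 1) * pCE (i + 1) / (c (i + 1) + γ (i + 1))) := by
    intro i hi
    have h1 := (hc i).ne'
    have h2 := (hc (i + 1)).ne'
    have h3 := (hμpos (i + 1)).ne'
    have h4 := (hc (i + 2)).ne'
    have h5 := (hμpos (i + 2)).ne'
    rw [hpCE i, hpCE (i + 1), hb (i + 1) hi]
    field_simp
  have heq : ∀ d i, N = i + 1 + d → pCE i = pV i := by
    intro d
    induction d with
    | zero =>
      intro i h
      have hIco : Finset.Ico (i + 1) N = ∅ := by
        rw [h]; simp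
      rw [hpCE i, hpV i, hbN (i + 1) (by omega), hIco, Finset.sum_empty]
      simp
    | succ m ih =>
      intro i h
      have hi : i + 1 < N := by omega
      rw [hCErec i hi, hVrec i hi, ih (i + 1) (by omega)]
  refine ⟨hVrec, hCErec, fun i hi => heq (N - i - 1) i (by omega), ?_⟩
  apply Finset.sum_congr rfl
  intro i hi
  have hi' := Finset.mem_range.mp hi
  rw [heq (N - i - 1) i (by omega)]
end

section
/- The sum of advertiser revenues Σ_{i=1}^{N} v_{σ(i)} c_{σ(i)} Π_{j<i}(1−c_{σ(j)}−γ_{σ(j)}) over all permutations σ is maximized when σ sorts advertisers in descending order of c_i v_i/(c_i+γ_i); moreover this maximum value is an upper bound on the search engine's expected revenue under any individually rational ranking-and-pricing mechanism (where each advertiser's per-click payment is at most his private value). -/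
open Finset

/-- Telescoping: cascade over an ordered finite set. -/
lemma cascade_tele {N : ℕ} (f : Fin N → ℝ) (T : Finset (Fin N)) :
    ∑ i ∈ T, (∏ j ∈ T.filter (fun j => j < i), f j) * (1 - f i)
      = 1 - ∏ j ∈ T, f j := by
  induction T using Finset.induction_on_min with
  | empty => simp
  | insert a s hlt ih =>
    have ha : a ∉ s := fun h => lt_irrefl a (hlt a h)
    rw [Finset.sum_insert ha, Finset.prod_insert ha]
    have h1 : (insert a s).filter (fun j => j < a) = ∅ := by
      apply Finset.filter_eq_empty_iff.mpr
      intro x hx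
      rcases Finset.mem_insert.mp hx with h | h
      · simp [h]
      · exact not_lt.mpr (hlt x h).le
    have h3 : ∑ i ∈ s, (∏ j ∈ (insert a s).filter (fun j => j < i), f j) * (1 - f i)
        = f a * ∑ i ∈ s, (∏ j ∈ s.filter (fun j => j < i), f j) * (1 - f i) := by
      rw [Finset.mul_sum]
      apply Finset.sum_congr rfl
      intro i hi
      rw [Finset.filter_insert, if_pos (hlt i hi),
        Finset.prod_insert (fun h => ha (Finset.mem_of_mem_filter a h))]
      ring
    rw [h1, h3, ih]
    simp only [Finset.prod_empty]
    ring

/-- Key bound: probability of stopping at an element of `A` under any order is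
at most `1 - ∏_{j∈A} q j`. -/
lemma cascade_key {N : ℕ} (q : Fin N → ℝ) (hq0 : ∀ i, 0 ≤ q i) (hq1 : ∀ i, q i ≤ 1)
    (σ : Equiv.Perm (Fin N)) (A : Finset (Fin N)) :
    ∑ i ∈ Finset.univ.filter (fun i => σ i ∈ A),
        (∏ j ∈ Finset.univ.filter (fun j => j < i), q (σ j)) * (1 - q (σ i))
      ≤ 1 - ∏ j ∈ A, q j := by
  set T := Finset.univ.filter (fun i => σ i ∈ A) with hT
  have himg : ∏ i ∈ T, q (σ i) = ∏ j ∈ A, q j := by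
    apply Finset.prod_nbij' σ σ.symm
    · intro i hi; rw [hT, Finset.mem_filter] at hi; exact hi.2
    · intro j hj; rw [hT, Finset.mem_filter]; simp [hj]
    · intro i _; simp
    · intro j _; simp
    · intro i _; rfl
  calc ∑ i ∈ T, (∏ j ∈ Finset.univ.filter (fun j => j < i), q (σ j)) * (1 - q (σ i))
      ≤ ∑ i ∈ T, (∏ j ∈ T.filter (fun j => j < i), q (σ j)) * (1 - q (σ i)) := by
        apply Finset.sum_le_sum
        intro i hi
        apply mul_le_mul_of_nonneg_right _ (by linarith [hq1 (σ i)])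
        have hsub : T.filter (fun j => j < i) ⊆ Finset.univ.filter (fun j => j < i) := by
          intro x hx
          rw [Finset.mem_filter] at hx ⊢
          exact ⟨Finset.mem_univ x, hx.2⟩
        rw [← Finset.prod_sdiff hsub]
        have h1 : ∏ j ∈ Finset.univ.filter (fun j => j < i) \ T.filter (fun j => j < i),
            q (σ j) ≤ 1 := Finset.prod_le_one (fun _ _ => hq0 _) (fun _ _ => hq1 _)
        have h2 : (0:ℝ) ≤ ∏ j ∈ T.filter (fun j => j < i), q (σ j) :=
          Finset.prod_nonneg (fun _ _ => hq0 _)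
        have h3 : (0:ℝ) ≤ ∏ j ∈ Finset.univ.filter (fun j => j < i) \ T.filter (fun j => j < i),
            q (σ j) := Finset.prod_nonneg (fun _ _ => hq0 _)
        nlinarith
    _ = 1 - ∏ i ∈ T, q (σ i) := cascade_tele (fun i => q (σ i)) T
    _ = 1 - ∏ j ∈ A, q j := by rw [himg]

/-- Revenue upper bound (Remarks 3 and 4): the total advertiser revenue
`∑ᵢ v_{σ(i)}c_{σ(i)}∏_{j<i}(1−c_{σ(j)}−γ_{σ(j)})` is maximized over all
permutations `σ` by the order descending in `cᵢvᵢ/(cᵢ+γᵢ)` (taken here to be the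
index order), and this maximum bounds the search engine's expected revenue under
any individually rational ranking-and-pricing mechanism (per-click payments
`pᵢ ≤ vᵢ`). -/
theorem social_revenue_upper_bound (N : ℕ) (v c γ : Fin N → ℝ)
    (hv : ∀ i, 0 ≤ v i) (hc : ∀ i, 0 < c i) (hc1 : ∀ i, c i ≤ 1)
    (hγ : ∀ i, 0 ≤ γ i) (hμ : ∀ i, c i + γ i ≤ 1)
    (hsort : ∀ i j : Fin N, i ≤ j →
      c j * v j / (c j + γ j) ≤ c i * v i / (c i + γ i)) :
    (∀ σ : Equiv.Perm (Fin N),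
      ∑ i : Fin N, v (σ i) * c (σ i) *
          ∏ j ∈ Finset.univ.filter (fun j => j < i), (1 - c (σ j) - γ (σ j)) ≤
      ∑ i : Fin N, v i * c i *
          ∏ j ∈ Finset.univ.filter (fun j => j < i), (1 - c j - γ j)) ∧
    (∀ σ : Equiv.Perm (Fin N), ∀ p : Fin N → ℝ, (∀ i, p i ≤ v i) →
      ∑ i : Fin N, p (σ i) * c (σ i) *
          ∏ j ∈ Finset.univ.filter (fun j => j < i), (1 - c (σ j) - γ (σ j)) ≤
      ∑ i : Fin N, v i * c i *
          ∏ j ∈ Finset.univ.filter (fun j => j < i), (1 - c j - γ j)) := by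
  have hpos : ∀ i, 0 < c i + γ i := fun i => lt_of_lt_of_le (hc i) (le_add_of_nonneg_right (hγ i))
  classical
  let q : Fin N → ℝ := fun i => 1 - c i - γ i
  let r : Fin N → ℝ := fun i => c i * v i / (c i + γ i)
  have hq0 : ∀ i, 0 ≤ q i := fun i => by have := hμ i; simp only [q]; linarith
  have hq1 : ∀ i, q i ≤ 1 := fun i => by have := hc i; have := hγ i; simp only [q]; linarith
  have hr0 : ∀ i, 0 ≤ r i := fun i => div_nonneg (mul_nonneg (hc i).le (hv i)) (hpos i).le
  have hvc : ∀ i, v i * c i = r i * (1 - q i) := by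
    intro i
    have h := (hpos i).ne'
    simp only [q, r]
    field_simp
    ring
  let r' : ℕ → ℝ := fun k => if h : k < N then r ⟨k, h⟩ else 0
  have hanti : ∀ k, r' (k+1) ≤ r' k := by
    intro k
    by_cases h1 : k + 1 < N
    · have h0 : k < N := Nat.lt_of_succ_lt h1
      simp only [r', dif_pos h1, dif_pos h0]
      exact hsort ⟨k, h0⟩ ⟨k+1, h1⟩ (by simp [Fin.le_def])
    · by_cases h0 : k < N
      · simp only [r', dif_neg h1, dif_pos h0]
        exact hr0 _
      · simp [r', dif_neg h1, dif_neg h0]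
  have hd0 : ∀ k, 0 ≤ r' k - r' (k+1) := fun k => by linarith [hanti k]
  have hrj : ∀ j : Fin N, r j = ∑ k ∈ Finset.Ico (j:ℕ) N, (r' k - r' (k+1)) := by
    intro j
    rw [Finset.sum_Ico_eq_sub _ j.2.le, Finset.sum_range_sub' r', Finset.sum_range_sub' r']
    have hN : r' N = 0 := by simp [r']
    have hj : r' (j:ℕ) = r j := by simp [r', j.2]
    rw [hN] at *
    linarith [hj]
  have hIco : ∀ j : Fin N, Finset.Ico (j:ℕ) N = (Finset.range N).filter (fun k => (j:ℕ) ≤ k) := by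
    intro j
    ext k
    simp [Finset.mem_Ico, Finset.mem_range, and_comm]
  have hdecomp : ∀ σ : Equiv.Perm (Fin N),
      ∑ i : Fin N, v (σ i) * c (σ i) *
          ∏ j ∈ Finset.univ.filter (fun j => j < i), (1 - c (σ j) - γ (σ j))
      = ∑ k ∈ Finset.range N, (r' k - r' (k+1)) *
          ∑ i ∈ Finset.univ.filter (fun i => ((σ i : ℕ) ≤ k)),
            (∏ j ∈ Finset.univ.filter (fun j => j < i), q (σ j)) * (1 - q (σ i)) := by
    intro σ
    have step1 : ∀ i : Fin N,
        v (σ i) * c (σ i) * ∏ j ∈ Finset.univ.filter (fun j => j < i), (1 - c (σ j) - γ (σ j))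
        = ∑ k ∈ Finset.range N, (if ((σ i : ℕ) ≤ k) then
            (r' k - r' (k+1)) *
              ((∏ j ∈ Finset.univ.filter (fun j => j < i), q (σ j)) * (1 - q (σ i))) else 0) := by
      intro i
      have : v (σ i) * c (σ i) * ∏ j ∈ Finset.univ.filter (fun j => j < i), (1 - c (σ j) - γ (σ j))
          = r (σ i) * ((∏ j ∈ Finset.univ.filter (fun j => j < i), q (σ j)) * (1 - q (σ i))) := by
        rw [hvc (σ i)]
        have : ∏ j ∈ Finset.univ.filter (fun j => j < i), (1 - c (σ j) - γ (σ j))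
            = ∏ j ∈ Finset.univ.filter (fun j => j < i), q (σ j) := rfl
        rw [this]; ring
      rw [this, hrj (σ i), hIco (σ i), Finset.sum_filter, Finset.sum_mul]
      apply Finset.sum_congr rfl
      intro k _
      by_cases h : ((σ i : ℕ) ≤ k) <;> simp [h]
    calc ∑ i : Fin N, v (σ i) * c (σ i) *
          ∏ j ∈ Finset.univ.filter (fun j => j < i), (1 - c (σ j) - γ (σ j))
        = ∑ i : Fin N, ∑ k ∈ Finset.range N, (if ((σ i : ℕ) ≤ k) then
            (r' k - r' (k+1)) *
              ((∏ j ∈ Finset.univ.filter (fun j => j < i), q (σ j)) * (1 - q (σ i))) else 0) :=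
          Finset.sum_congr rfl (fun i _ => step1 i)
      _ = ∑ k ∈ Finset.range N, ∑ i : Fin N, (if ((σ i : ℕ) ≤ k) then
            (r' k - r' (k+1)) *
              ((∏ j ∈ Finset.univ.filter (fun j => j < i), q (σ j)) * (1 - q (σ i))) else 0) :=
          Finset.sum_comm
      _ = ∑ k ∈ Finset.range N, (r' k - r' (k+1)) *
            ∑ i ∈ Finset.univ.filter (fun i => ((σ i : ℕ) ≤ k)),
              (∏ j ∈ Finset.univ.filter (fun j => j < i), q (σ j)) * (1 - q (σ i)) := by
          apply Finset.sum_congr rfl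
          intro k _
          rw [Finset.mul_sum, Finset.sum_filter]
  have hub : ∀ (k : ℕ) (σ : Equiv.Perm (Fin N)),
      ∑ i ∈ Finset.univ.filter (fun i => ((σ i : ℕ) ≤ k)),
        (∏ j ∈ Finset.univ.filter (fun j => j < i), q (σ j)) * (1 - q (σ i))
      ≤ 1 - ∏ j ∈ Finset.univ.filter (fun j : Fin N => ((j : ℕ) ≤ k)), q j := by
    intro k σ
    have := cascade_key q hq0 hq1 σ (Finset.univ.filter (fun j : Fin N => ((j : ℕ) ≤ k)))
    have hset : Finset.univ.filter (fun i => σ i ∈ Finset.univ.filter (fun j : Fin N => ((j : ℕ) ≤ k)))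
        = Finset.univ.filter (fun i => ((σ i : ℕ) ≤ k)) := by
      ext i; simp
    rwa [hset] at this
  have hid : ∀ k : ℕ,
      ∑ i ∈ Finset.univ.filter (fun i : Fin N => ((i : ℕ) ≤ k)),
        (∏ j ∈ Finset.univ.filter (fun j => j < i), q j) * (1 - q i)
      = 1 - ∏ j ∈ Finset.univ.filter (fun j : Fin N => ((j : ℕ) ≤ k)), q j := by
    intro k
    rw [← cascade_tele q (Finset.univ.filter (fun j : Fin N => ((j : ℕ) ≤ k)))]
    apply Finset.sum_congr rfl
    intro i hi
    rw [Finset.mem_filter] at hi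
    congr 1
    apply Finset.prod_congr _ (fun _ _ => rfl)
    ext j
    simp only [Finset.mem_filter, Finset.mem_univ, true_and]
    constructor
    · intro h; exact ⟨le_trans (le_of_lt (by exact_mod_cast h)) hi.2, h⟩
    · intro h; exact h.2
  have part1 : ∀ σ : Equiv.Perm (Fin N),
      ∑ i : Fin N, v (σ i) * c (σ i) *
          ∏ j ∈ Finset.univ.filter (fun j => j < i), (1 - c (σ j) - γ (σ j)) ≤
      ∑ i : Fin N, v i * c i *
          ∏ j ∈ Finset.univ.filter (fun j => j < i), (1 - c j - γ j) := by
    intro σ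
    have hone := hdecomp 1
    simp only [Equiv.Perm.coe_one, id_eq] at hone
    rw [hdecomp σ, hone]
    apply Finset.sum_le_sum
    intro k _
    apply mul_le_mul_of_nonneg_left _ (hd0 k)
    calc ∑ i ∈ Finset.univ.filter (fun i => ((σ i : ℕ) ≤ k)),
          (∏ j ∈ Finset.univ.filter (fun j => j < i), q (σ j)) * (1 - q (σ i))
        ≤ 1 - ∏ j ∈ Finset.univ.filter (fun j : Fin N => ((j : ℕ) ≤ k)), q j := hub k σ
      _ = ∑ i ∈ Finset.univ.filter (fun i : Fin N => ((i : ℕ) ≤ k)),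
          (∏ j ∈ Finset.univ.filter (fun j => j < i), q j) * (1 - q i) := (hid k).symm
  refine ⟨part1, ?_⟩
  intro σ p hp
  refine le_trans ?_ (part1 σ)
  apply Finset.sum_le_sum
  intro i _
  apply mul_le_mul_of_nonneg_right _ (Finset.prod_nonneg ?_)
  · exact mul_le_mul_of_nonneg_right (hp (σ i)) (hc (σ i)).le
  · intro j _
    have := hμ (σ j); linarith
end
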